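/- An integer n ≥ 2 is prime if and only if C(n-1, k) ≡ (-1)^k (mod n) for all integers k with 0 ≤ k ≤ n-1. -/

import Mathlib

theorem stmt3 (n : ℕ) (hn : 2 ≤ n) :
    n.Prime ↔ ∀ k ≤ n - 1, (((n - 1).choose k : ℤ)) ≡ (-1) ^ k [ZMOD (n : ℤ)] := by
  constructor
  · intro hp k hk
    induction k with
    | zero => simp [Int.ModEq.refl]
    | succ k ih =>
      have hk' : k ≤ n - 1 := by omega
      have h1 := ih hk'
      have hpas : n.choose (k + 1) = (n - 1).choose k + (n - 1).choose (k + 1) := by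
        conv_lhs => rw [show n = (n - 1) + 1 by omega]
        rw [Nat.choose_succ_succ]
      have hdvd : n ∣ n.choose (k + 1) :=
        hp.dvd_choose_self (Nat.succ_ne_zero k) (by omega)
      have h0 : ((n.choose (k + 1) : ℤ)) ≡ 0 [ZMOD (n : ℤ)] := by
        have : (n : ℤ) ∣ (n.choose (k + 1) : ℤ) := Int.natCast_dvd_natCast.mpr hdvd
        simpa [Int.emod_emod_of_dvd] using (Int.modEq_zero_iff_dvd).mpr this
      have h2 : (((n - 1).choose (k + 1) : ℤ)) =
          (n.choose (k + 1) : ℤ) - ((n - 1).choose k : ℤ) := by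
        rw [hpas]; push_cast; ring
      calc (((n - 1).choose (k + 1) : ℤ))
          = (n.choose (k + 1) : ℤ) - ((n - 1).choose k : ℤ) := h2
        _ ≡ 0 - (-1) ^ k [ZMOD (n : ℤ)] := h0.sub h1
        _ = (-1) ^ (k + 1) := by ring
  · intro h
    by_contra hnp
    set p := n.minFac with hp_def
    have hp : p.Prime := Nat.minFac_prime (by omega)
    have hpn : p ∣ n := Nat.minFac_dvd n
    have hplt : p < n := by
      rcases lt_or_eq_of_le (Nat.le_of_dvd (by omega) hpn) with h' | h'
      · exact h'
      · exact absurd (h' ▸ hp) hnp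
    have hp2 : 2 ≤ p := hp.two_le
    -- n ∣ choose n p
    obtain ⟨q, hq⟩ : ∃ q, p = q + 1 := ⟨p - 1, by omega⟩
    have hc1 := h (p - 1) (by omega)
    have hc2 := h p (by omega)
    have hpas : (n.choose p : ℤ) = ((n - 1).choose (p - 1) : ℤ) + ((n - 1).choose p : ℤ) := by
      have : n.choose p = (n - 1).choose (p - 1) + (n - 1).choose p := by
        conv_lhs => rw [show n = (n - 1) + 1 by omega, hq]
        rw [Nat.choose_succ_succ, Nat.succ_eq_add_one, show q = p - 1 by omega, show (p - 1) + 1 = p by omega]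
      rw [this]; push_cast; ring
    have hzero : (n.choose p : ℤ) ≡ 0 [ZMOD (n : ℤ)] := by
      calc (n.choose p : ℤ) = ((n - 1).choose (p - 1) : ℤ) + ((n - 1).choose p : ℤ) := hpas
        _ ≡ (-1) ^ (p - 1) + (-1) ^ p [ZMOD (n : ℤ)] := hc1.add hc2
        _ = 0 := by
            rw [hq]
            simp [pow_succ]
    have hndvd : n ∣ n.choose p := by
      have : (n : ℤ) ∣ (n.choose p : ℤ) := (Int.modEq_zero_iff_dvd).mp hzero
      exact_mod_cast this
    -- p * choose n p = n * choose (n-1) (p-1)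
    have hkey : n * (n - 1).choose (p - 1) = n.choose p * p := by
      have := Nat.add_one_mul_choose_eq (n - 1) (p - 1)
      rwa [show n - 1 + 1 = n by omega, show p - 1 + 1 = p by omega] at this
    obtain ⟨t, ht⟩ := hndvd
    have hptdvd : p ∣ (n - 1).choose (p - 1) := by
      refine ⟨t, ?_⟩
      have hn0 : 0 < n := by omega
      have : n * (n - 1).choose (p - 1) = n * (p * t) := by
        rw [hkey, ht]; ring
      exact Nat.eq_of_mul_eq_mul_left hn0 this
    -- Lucas: choose (n-1) (p-1) ≡ 1 mod p
    haveI : Fact p.Prime := ⟨hp⟩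
    obtain ⟨m, hm⟩ := hpn
    have hm1 : 1 ≤ m := by
      rcases Nat.eq_zero_or_pos m with h0 | h0
      · subst h0; simp at hm; omega
      · exact h0
    have hmod : (n - 1) % p = p - 1 := by
      have : n - 1 = p * (m - 1) + (p - 1) := by
        rw [hm]
        cases m with
        | zero => omega
        | succ m' => simp [Nat.mul_succ]; omega
      rw [this, Nat.mul_add_mod, Nat.mod_eq_of_lt (by omega)]
    have hmod2 : (p - 1) % p = p - 1 := Nat.mod_eq_of_lt (by omega)
    have hdiv2 : (p - 1) / p = 0 := Nat.div_eq_of_lt (by omega)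
    have hlucas := @Choose.choose_modEq_choose_mod_mul_choose_div (n - 1) (p - 1) p ⟨hp⟩
    rw [hmod, hmod2, hdiv2, Nat.choose_self, Nat.choose_zero_right] at hlucas
    have hone : ((n - 1).choose (p - 1) : ℤ) ≡ 1 [ZMOD (p : ℤ)] := by
      simpa using hlucas
    have hzero' : ((n - 1).choose (p - 1) : ℤ) ≡ 0 [ZMOD (p : ℤ)] := by
      have : (p : ℤ) ∣ ((n - 1).choose (p - 1) : ℤ) := Int.natCast_dvd_natCast.mpr hptdvd
      exact (Int.modEq_zero_iff_dvd).mpr this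
    have : (0 : ℤ) ≡ 1 [ZMOD (p : ℤ)] := hzero'.symm.trans hone
    have : (p : ℤ) ∣ 1 := by
      have := (Int.emod_emod_of_dvd)
      have h' := Int.ModEq.dvd ‹(0 : ℤ) ≡ 1 [ZMOD (p : ℤ)]›
      simpa using h'
    have : p ≤ 1 := by
      have := Int.le_of_dvd (by norm_num) this
      exact_mod_cast this
    omega
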